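/- arXiv:2604.21745 — 3 statements merged into one kernel-verified Lean document; each statement's English description precedes it below -/
import Mathlib

section
/- Let F and G be CDFs of real-valued probability measures with generalized inverse (quantile) functions Q_F and Q_G, and let U be uniformly distributed on (0,1). Then the pair (X,Y) = (Q_F(U), Q_G(U)) has joint CDF equal to H_1(x,y) = min{F(x), G(y)}, and X has CDF F, Y has CDF G. -/
open MeasureTheory Set

/-- Generalized quantile (inverse CDF): `Q_F(u) = inf {x | F x ≥ u}`. -/
noncomputable def quantile (F : ℝ → ℝ) (u : ℝ) : ℝ := sInf {x | u ≤ F x}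

/-- CDF of a real random variable `X` under `P`. -/
noncomputable def cdfRV {Ω : Type*} [MeasurableSpace Ω] (P : Measure Ω) (X : Ω → ℝ) (x : ℝ) : ℝ :=
  (P {ω | X ω ≤ x}).toReal

/-- CDF of a measure on ℝ. -/
noncomputable def cdfOf (μ : Measure ℝ) (x : ℝ) : ℝ := (μ (Iic x)).toReal

/-- Uniform distribution on (0,1). -/
noncomputable def unif : Measure ℝ := volume.restrict (Ioo 0 1)

/-- 1-Wasserstein distance on ℝ: infimum over couplings of the expected distance. -/
noncomputable def W1 (μ ν : Measure ℝ) : ENNReal :=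
  ⨅ π ∈ {π : Measure (ℝ × ℝ) | π.map Prod.fst = μ ∧ π.map Prod.snd = ν},
    ∫⁻ p, ENNReal.ofReal |p.1 - p.2| ∂π

open Filter ProbabilityTheory
open scoped Topology

lemma cdfOf_eq (μ : Measure ℝ) [IsProbabilityMeasure μ] : cdfOf μ = cdf μ := by
  funext x; rw [cdfOf, cdf_eq_real, measureReal_def]

lemma cdfOf_nonneg (μ : Measure ℝ) (x : ℝ) : 0 ≤ cdfOf μ x := ENNReal.toReal_nonneg

lemma cdfOf_le_one (μ : Measure ℝ) [IsProbabilityMeasure μ] (x : ℝ) : cdfOf μ x ≤ 1 := by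
  rw [cdfOf_eq]; exact cdf_le_one μ x

lemma quantile_le_iff (μ : Measure ℝ) [IsProbabilityMeasure μ] {u x : ℝ}
    (hu0 : 0 < u) (hu1 : u < 1) : quantile (cdfOf μ) u ≤ x ↔ u ≤ cdfOf μ x := by
  rw [cdfOf_eq, quantile]
  set F := cdf μ
  set S : Set ℝ := {x | u ≤ F x} with hS
  have hne : S.Nonempty := by
    obtain ⟨z, hz⟩ := ((tendsto_cdf_atTop μ).eventually (eventually_ge_nhds hu1)).exists
    exact ⟨z, hz⟩
  have hbdd : BddBelow S := by
    obtain ⟨z, hz⟩ := ((tendsto_cdf_atBot μ).eventually (eventually_lt_nhds hu0)).exists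
    refine ⟨z, fun s hs => ?_⟩
    by_contra hlt
    exact absurd (le_trans hs ((monotone_cdf μ) (le_of_not_ge hlt))) (not_le.mpr hz)
  constructor
  · intro h
    have hmem : sInf S ∈ S := by
      have key : ∀ t ∈ Ioi (sInf S), u ≤ F t := by
        intro t ht
        obtain ⟨s, hs, hst⟩ := exists_lt_of_csInf_lt hne ht
        exact le_trans hs ((monotone_cdf μ) hst.le)
      have hcont : Tendsto F (𝓝[>] (sInf S)) (𝓝 (F (sInf S))) :=
        (F.right_continuous (sInf S)).mono_left (nhdsWithin_mono _ Ioi_subset_Ici_self)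
      exact ge_of_tendsto hcont (eventually_nhdsWithin_of_forall key)
    exact le_trans hmem ((monotone_cdf μ) h)
  · intro h
    exact csInf_le hbdd h

lemma vol_aux {m : ℝ} (hm0 : 0 ≤ m) (hm1 : m ≤ 1) :
    volume (Ioo (0:ℝ) 1 ∩ Iic m) = ENNReal.ofReal m := by
  apply le_antisymm
  · calc volume (Ioo (0:ℝ) 1 ∩ Iic m) ≤ volume (Ioc 0 m) := by
          apply measure_mono; rintro t ⟨⟨h1, _⟩, h3⟩; exact ⟨h1, h3⟩
      _ = ENNReal.ofReal m := by rw [Real.volume_Ioc, sub_zero]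
  · calc ENNReal.ofReal m = volume (Ioo (0:ℝ) m) := by rw [Real.volume_Ioo, sub_zero]
      _ ≤ volume (Ioo (0:ℝ) 1 ∩ Iic m) := by
          apply measure_mono; rintro t ⟨h1, h2⟩
          exact ⟨⟨h1, lt_of_lt_of_le h2 hm1⟩, h2.le⟩

lemma event_aux {Ω : Type*} [MeasurableSpace Ω] (P : Measure Ω)
    [IsProbabilityMeasure P] (U : Ω → ℝ) (hU : Measurable U) (hUnif : P.map U = unif)
    (m : ℝ) (hm0 : 0 ≤ m) (hm1 : m ≤ 1) (S : Set Ω)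
    (hS : ∀ ω, U ω ∈ Ioo (0:ℝ) 1 → (ω ∈ S ↔ U ω ≤ m)) :
    (P S).toReal = m := by
  have hae : ∀ᵐ ω ∂P, U ω ∈ Ioo (0:ℝ) 1 := by
    have h0 : P (U ⁻¹' (Ioo (0:ℝ) 1)ᶜ) = 0 := by
      rw [← Measure.map_apply hU measurableSet_Ioo.compl, hUnif, unif,
        Measure.restrict_apply measurableSet_Ioo.compl, compl_inter_self, measure_empty]
    rw [ae_iff]
    convert h0 using 2
    rfl
  have heq : S =ᵐ[P] (U ⁻¹' (Ioo (0:ℝ) 1 ∩ Iic m)) := by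
    rw [Filter.eventuallyEq_set]
    filter_upwards [hae] with ω hω
    simp only [mem_preimage, mem_inter_iff, mem_Iic]
    exact ⟨fun h => ⟨hω, (hS ω hω).mp h⟩, fun h => (hS ω hω).mpr h.2⟩
  rw [measure_congr heq, ← Measure.map_apply hU (measurableSet_Ioo.inter measurableSet_Iic),
    hUnif, unif, Measure.restrict_apply (measurableSet_Ioo.inter measurableSet_Iic)]
  rw [inter_assoc, inter_comm (Iic m), ← inter_assoc, inter_self]
  rw [vol_aux hm0 hm1, ENNReal.toReal_ofReal hm0]

theorem comonotone_coupling_cdf {Ω : Type*} [MeasurableSpace Ω] (P : Measure Ω)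
    [IsProbabilityMeasure P] (μ ν : Measure ℝ) [IsProbabilityMeasure μ] [IsProbabilityMeasure ν]
    (U : Ω → ℝ) (hU : Measurable U) (hUnif : P.map U = unif) :
    (∀ x y : ℝ,
      (P {ω | quantile (cdfOf μ) (U ω) ≤ x ∧ quantile (cdfOf ν) (U ω) ≤ y}).toReal
        = min (cdfOf μ x) (cdfOf ν y)) ∧
    (∀ x : ℝ, cdfRV P (fun ω => quantile (cdfOf μ) (U ω)) x = cdfOf μ x) ∧
    (∀ y : ℝ, cdfRV P (fun ω => quantile (cdfOf ν) (U ω)) y = cdfOf ν y) := by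
  refine ⟨fun x y => ?_, fun x => ?_, fun y => ?_⟩
  · apply event_aux P U hU hUnif _
      (le_min (cdfOf_nonneg μ x) (cdfOf_nonneg ν y))
      (le_trans (min_le_left _ _) (cdfOf_le_one μ x))
    intro ω hω
    simp only [mem_setOf_eq, le_min_iff]
    rw [quantile_le_iff μ hω.1 hω.2, quantile_le_iff ν hω.1 hω.2]
  · apply event_aux P U hU hUnif _ (cdfOf_nonneg μ x) (cdfOf_le_one μ x)
    intro ω hω
    simp only [cdfRV, mem_setOf_eq]
    rw [quantile_le_iff μ hω.1 hω.2]
  · apply event_aux P U hU hUnif _ (cdfOf_nonneg ν y) (cdfOf_le_one ν y)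
    intro ω hω
    simp only [cdfRV, mem_setOf_eq]
    rw [quantile_le_iff ν hω.1 hω.2]
end

section
/- Let X and Y be integrable real-valued random variables with CDFs F_μ and F_ν respectively, defined on a common probability space. Then E|X − Y| ≥ ∫_R |F_μ(t) − F_ν(t)| dt. -/
open MeasureTheory Set
open scoped ENNReal

lemma strip_lintegral {Ω : Type*} [MeasurableSpace Ω]
    (P : Measure Ω) [IsProbabilityMeasure P] (W Z : Ω → ℝ)
    (hW : Measurable W) (hZ : Measurable Z) :
    ∫⁻ t : ℝ, P {ω | W ω ≤ t ∧ t < Z ω} = ∫⁻ ω, ENNReal.ofReal (Z ω - W ω) ∂P := by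
  have hmeas : MeasurableSet {p : ℝ × Ω | W p.2 ≤ p.1 ∧ p.1 < Z p.2} := by
    apply MeasurableSet.inter
    · exact measurableSet_le (hW.comp measurable_snd) measurable_fst
    · exact measurableSet_lt measurable_fst (hZ.comp measurable_snd)
  have hF : AEMeasurable (Function.uncurry fun t ω =>
      ({p : ℝ × Ω | W p.2 ≤ p.1 ∧ p.1 < Z p.2}.indicator (1 : ℝ × Ω → ℝ≥0∞) (t, ω)))
      ((volume : Measure ℝ).prod P) := by
    have : (Function.uncurry fun t ω =>
        ({p : ℝ × Ω | W p.2 ≤ p.1 ∧ p.1 < Z p.2}.indicator (1 : ℝ × Ω → ℝ≥0∞) (t, ω)))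
        = {p : ℝ × Ω | W p.2 ≤ p.1 ∧ p.1 < Z p.2}.indicator 1 := rfl
    rw [this]
    exact (measurable_const.indicator hmeas).aemeasurable
  calc ∫⁻ t : ℝ, P {ω | W ω ≤ t ∧ t < Z ω}
      = ∫⁻ t : ℝ, ∫⁻ ω, ({p : ℝ × Ω | W p.2 ≤ p.1 ∧ p.1 < Z p.2}.indicator 1 (t, ω)) ∂P := by
        refine lintegral_congr fun t => ?_
        have hs : MeasurableSet {ω | W ω ≤ t ∧ t < Z ω} :=
          (measurableSet_le hW measurable_const).inter (measurableSet_lt measurable_const hZ)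
        rw [← lintegral_indicator_one hs]
        rfl
    _ = ∫⁻ ω, ∫⁻ t, ({p : ℝ × Ω | W p.2 ≤ p.1 ∧ p.1 < Z p.2}.indicator 1 (t, ω)) ∂volume ∂P :=
        lintegral_lintegral_swap hF
    _ = ∫⁻ ω, ENNReal.ofReal (Z ω - W ω) ∂P := by
        refine lintegral_congr fun ω => ?_
        have : (fun t => ({p : ℝ × Ω | W p.2 ≤ p.1 ∧ p.1 < Z p.2}.indicator (1:ℝ×Ω→ℝ≥0∞) (t, ω)))
            = (Ico (W ω) (Z ω)).indicator 1 := by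
          ext t
          simp [Set.indicator_apply, Set.mem_Ico]
        rw [this, lintegral_indicator_one measurableSet_Ico, Real.volume_Ico]

theorem expectation_abs_sub_ge_cdf_integral {Ω : Type*} [MeasurableSpace Ω]
    (P : Measure Ω) [IsProbabilityMeasure P] (X Y : Ω → ℝ)
    (hX : Measurable X) (hY : Measurable Y)
    (hXi : Integrable X P) (hYi : Integrable Y P) :
    ∫ t : ℝ, |cdfRV P X t - cdfRV P Y t| ≤ ∫ ω, |X ω - Y ω| ∂P := by
  -- pointwise bound
  have h1 : ∀ t : ℝ, ENNReal.ofReal |cdfRV P X t - cdfRV P Y t|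
      ≤ P {ω | X ω ≤ t ∧ t < Y ω} + P {ω | Y ω ≤ t ∧ t < X ω} := by
    intro t
    set A : Set Ω := {ω | X ω ≤ t}
    set B : Set Ω := {ω | Y ω ≤ t}
    have hAB : {ω | X ω ≤ t ∧ t < Y ω} = A \ B := by
      ext ω; simp [A, B, Set.mem_diff, not_le]
    have hBA : {ω | Y ω ≤ t ∧ t < X ω} = B \ A := by
      ext ω; simp [A, B, Set.mem_diff, not_le]
    rw [hAB, hBA]
    have hA : P A = P (A ∩ B) + P (A \ B) := (measure_inter_add_diff A (by
      exact measurableSet_le hY measurable_const)).symm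
    have hB : P B = P (B ∩ A) + P (B \ A) := (measure_inter_add_diff B (by
      exact measurableSet_le hX measurable_const)).symm
    have hsymm : P (A ∩ B) = P (B ∩ A) := by rw [Set.inter_comm]
    have key : cdfRV P X t - cdfRV P Y t = (P (A \ B)).toReal - (P (B \ A)).toReal := by
      have e1 : cdfRV P X t = (P (A ∩ B)).toReal + (P (A \ B)).toReal := by
        rw [cdfRV]
        show (P A).toReal = _
        rw [hA, ENNReal.toReal_add (measure_ne_top _ _) (measure_ne_top _ _)]
      have e2 : cdfRV P Y t = (P (A ∩ B)).toReal + (P (B \ A)).toReal := by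
        rw [cdfRV]
        show (P B).toReal = _
        rw [hB, ENNReal.toReal_add (measure_ne_top _ _) (measure_ne_top _ _), hsymm]
      rw [e1, e2]; ring
    rw [key]
    calc ENNReal.ofReal |(P (A \ B)).toReal - (P (B \ A)).toReal|
        ≤ ENNReal.ofReal ((P (A \ B)).toReal + (P (B \ A)).toReal) :=
          ENNReal.ofReal_le_ofReal ((abs_sub _ _).trans (by
            rw [abs_of_nonneg ENNReal.toReal_nonneg, abs_of_nonneg ENNReal.toReal_nonneg]))
      _ = ENNReal.ofReal (P (A \ B) + P (B \ A)).toReal := by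
          rw [ENNReal.toReal_add (measure_ne_top _ _) (measure_ne_top _ _)]
      _ = P (A \ B) + P (B \ A) := ENNReal.ofReal_toReal (by
          exact ENNReal.add_ne_top.mpr ⟨measure_ne_top _ _, measure_ne_top _ _⟩)
  -- measurability of the cdf difference
  have hmono : ∀ W : Ω → ℝ, Monotone (cdfRV P W) := by
    intro W a b hab
    exact ENNReal.toReal_mono (measure_ne_top _ _)
      (measure_mono fun ω hω => le_trans hω hab)
  have hFmeas : Measurable fun t => |cdfRV P X t - cdfRV P Y t| :=
    (((hmono X).measurable).sub ((hmono Y).measurable)).abs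
  -- rewrite both sides as toReal of lintegrals
  have hLHS : ∫ t : ℝ, |cdfRV P X t - cdfRV P Y t|
      = (∫⁻ t : ℝ, ENNReal.ofReal |cdfRV P X t - cdfRV P Y t|).toReal := by
    rw [integral_eq_lintegral_of_nonneg_ae (Filter.Eventually.of_forall fun t => abs_nonneg _)
      hFmeas.aestronglyMeasurable]
  have hRHS : ∫ ω, |X ω - Y ω| ∂P
      = (∫⁻ ω, ENNReal.ofReal |X ω - Y ω| ∂P).toReal := by
    rw [integral_eq_lintegral_of_nonneg_ae (f := fun ω => |X ω - Y ω|) (Filter.Eventually.of_forall fun ω => abs_nonneg _)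
      ((hX.sub hY).abs).aestronglyMeasurable]
  -- the key lintegral comparison
  have hsum : ∫⁻ t : ℝ, (P {ω | X ω ≤ t ∧ t < Y ω} + P {ω | Y ω ≤ t ∧ t < X ω})
      = ∫⁻ ω, ENNReal.ofReal |X ω - Y ω| ∂P := by
    have hm1 : Measurable fun t => P {ω | X ω ≤ t ∧ t < Y ω} := by
      have : MeasurableSet {p : ℝ × Ω | X p.2 ≤ p.1 ∧ p.1 < Y p.2} :=
        (measurableSet_le (hX.comp measurable_snd) measurable_fst).inter
          (measurableSet_lt measurable_fst (hY.comp measurable_snd))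
      exact measurable_measure_prodMk_left this
    rw [lintegral_add_left hm1, strip_lintegral P X Y hX hY, strip_lintegral P Y X hY hX,
      ← lintegral_add_left (f := fun ω => ENNReal.ofReal (Y ω - X ω)) (hY.sub hX).ennreal_ofReal]
    refine lintegral_congr fun ω => ?_
    rcases le_total (X ω) (Y ω) with h | h
    · have hz : ENNReal.ofReal (X ω - Y ω) = 0 := ENNReal.ofReal_of_nonpos (by linarith)
      rw [hz, add_zero, abs_of_nonpos (by linarith), neg_sub]
    · have hz : ENNReal.ofReal (Y ω - X ω) = 0 := ENNReal.ofReal_of_nonpos (by linarith)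
      rw [hz, zero_add, abs_of_nonneg (by linarith)]
  have hfin : ∫⁻ ω, ENNReal.ofReal |X ω - Y ω| ∂P ≠ ⊤ := by
    have hi : Integrable (fun ω => X ω - Y ω) P := hXi.sub hYi
    have := hi.hasFiniteIntegral
    rw [HasFiniteIntegral] at this
    refine ne_of_lt (lt_of_le_of_lt (le_of_eq ?_) this)
    refine lintegral_congr fun ω => ?_
    rw [← Real.enorm_eq_ofReal_abs]
  have hle : ∫⁻ t : ℝ, ENNReal.ofReal |cdfRV P X t - cdfRV P Y t|
      ≤ ∫⁻ ω, ENNReal.ofReal |X ω - Y ω| ∂P := by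
    rw [← hsum]
    exact lintegral_mono h1
  rw [hLHS, hRHS]
  exact ENNReal.toReal_mono hfin hle
end

section
/- Let μ and ν be probability measures on R with finite first moments, with CDFs F_μ, F_ν. Then the 1-Wasserstein distance satisfies W_1(μ,ν) ≥ ∫_R |F_μ(t) − F_ν(t)| dt. -/
open MeasureTheory Set

theorem W1_ge_cdf_integral (μ ν : Measure ℝ)
    [IsProbabilityMeasure μ] [IsProbabilityMeasure ν]
    (hμ : Integrable id μ) (hν : Integrable id ν) :
    ENNReal.ofReal (∫ t : ℝ, |cdfOf μ t - cdfOf ν t|) ≤ W1 μ ν := by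
  refine le_iInf₂ fun π hπ => ?_
  obtain ⟨h1, h2⟩ := hπ
  have hπuniv : π univ = 1 := by
    have h : π.map Prod.fst univ = 1 := by rw [h1]; exact measure_univ
    rwa [Measure.map_apply measurable_fst MeasurableSet.univ, preimage_univ] at h
  haveI : IsProbabilityMeasure π := ⟨hπuniv⟩
  -- the "crossing" set
  set S : Set (ℝ × (ℝ × ℝ)) :=
    {q | (q.2.1 ≤ q.1 ∧ q.1 < q.2.2) ∨ (q.2.2 ≤ q.1 ∧ q.1 < q.2.1)} with hSdef
  have hS : MeasurableSet S := by
    have : S = ({q : ℝ × (ℝ × ℝ) | q.2.1 ≤ q.1} ∩ {q | q.1 < q.2.2}) ∪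
        ({q : ℝ × (ℝ × ℝ) | q.2.2 ≤ q.1} ∩ {q | q.1 < q.2.1}) := by
      rfl
    rw [this]
    exact ((measurableSet_le measurable_snd.fst measurable_fst).inter
        (measurableSet_lt measurable_fst measurable_snd.snd)).union
      ((measurableSet_le measurable_snd.snd measurable_fst).inter
        (measurableSet_lt measurable_fst measurable_snd.fst))
  -- pointwise bound
  have keyA : ∀ t : ℝ, ENNReal.ofReal |cdfOf μ t - cdfOf ν t| ≤ π {p | (t, p) ∈ S} := by
    intro t
    set B : Set (ℝ × ℝ) := Prod.fst ⁻¹' Iic t with hBdef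
    set C : Set (ℝ × ℝ) := Prod.snd ⁻¹' Iic t with hCdef
    set A : Set (ℝ × ℝ) := {p | (t, p) ∈ S} with hAdef
    have hBμ : cdfOf μ t = (π B).toReal := by
      rw [cdfOf, ← h1, Measure.map_apply measurable_fst measurableSet_Iic]
    have hCν : cdfOf ν t = (π C).toReal := by
      rw [cdfOf, ← h2, Measure.map_apply measurable_snd measurableSet_Iic]
    have hBsub : B ⊆ C ∪ A := by
      intro p hp
      by_cases h : p.2 ≤ t
      · exact Or.inl h
      · exact Or.inr (Or.inl ⟨hp, lt_of_not_ge h⟩)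
    have hCsub : C ⊆ B ∪ A := by
      intro p hp
      by_cases h : p.1 ≤ t
      · exact Or.inl h
      · exact Or.inr (Or.inr ⟨hp, lt_of_not_ge h⟩)
    have hfin : ∀ s : Set (ℝ × ℝ), π s ≠ ⊤ := fun s => measure_ne_top π s
    have hB1 : (π B).toReal ≤ (π C).toReal + (π A).toReal := by
      have := (measure_mono hBsub).trans (measure_union_le (μ := π) C A)
      have := ENNReal.toReal_mono (by simp [ENNReal.add_ne_top, hfin]) this
      rwa [ENNReal.toReal_add (hfin C) (hfin A)] at this
    have hC1 : (π C).toReal ≤ (π B).toReal + (π A).toReal := by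
      have := (measure_mono hCsub).trans (measure_union_le (μ := π) B A)
      have := ENNReal.toReal_mono (by simp [ENNReal.add_ne_top, hfin]) this
      rwa [ENNReal.toReal_add (hfin B) (hfin A)] at this
    have habs : |cdfOf μ t - cdfOf ν t| ≤ (π A).toReal := by
      rw [hBμ, hCν, abs_sub_le_iff]
      constructor <;> linarith
    calc ENNReal.ofReal |cdfOf μ t - cdfOf ν t| ≤ ENNReal.ofReal (π A).toReal :=
          ENNReal.ofReal_le_ofReal habs
      _ = π A := ENNReal.ofReal_toReal (hfin A)
  -- Tonelli step
  have keyB : ∫⁻ t, π {p | (t, p) ∈ S} = ∫⁻ p, ENNReal.ofReal |p.1 - p.2| ∂π := by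
    have hsec : ∀ t : ℝ, MeasurableSet {p : ℝ × ℝ | (t, p) ∈ S} :=
      fun t => hS.preimage (measurable_prodMk_left)
    have hind : Measurable (S.indicator (fun _ => (1 : ENNReal))) :=
      measurable_const.indicator hS
    calc ∫⁻ t, π {p | (t, p) ∈ S}
        = ∫⁻ t, ∫⁻ p, S.indicator (fun _ => (1 : ENNReal)) (t, p) ∂π := by
          congr 1; funext t
          rw [← lintegral_indicator_one (hsec t)]
          rfl
      _ = ∫⁻ p, ∫⁻ t, S.indicator (fun _ => (1 : ENNReal)) (t, p) ∂volume ∂π := by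
          exact lintegral_lintegral_swap hind.aemeasurable
      _ = ∫⁻ p, ENNReal.ofReal |p.1 - p.2| ∂π := by
          congr 1; funext p
          have hset : (fun t : ℝ => S.indicator (fun _ => (1 : ENNReal)) (t, p))
              = (Ico p.1 p.2 ∪ Ico p.2 p.1).indicator (fun _ => (1 : ENNReal)) := by
            funext t
            simp only [indicator_apply, hSdef, mem_setOf_eq, mem_union, mem_Ico]
          rw [hset]
          rw [show (lintegral volume ((Ico p.1 p.2 ∪ Ico p.2 p.1).indicator fun _ => (1 : ENNReal)))
              = volume (Ico p.1 p.2 ∪ Ico p.2 p.1) from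
            lintegral_indicator_one (measurableSet_Ico.union measurableSet_Ico)]
          rcases le_total p.1 p.2 with h | h
          · rw [Ico_eq_empty (not_lt.2 h), union_empty, Real.volume_Ico,
              abs_of_nonpos (by linarith), neg_sub]
          · rw [Ico_eq_empty (not_lt.2 h), empty_union, Real.volume_Ico,
              abs_of_nonneg (by linarith)]
  calc ENNReal.ofReal (∫ t : ℝ, |cdfOf μ t - cdfOf ν t|)
      ≤ ∫⁻ t, ENNReal.ofReal |cdfOf μ t - cdfOf ν t| := by
        by_cases hI : Integrable (fun t => |cdfOf μ t - cdfOf ν t|) volume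
        · rw [ofReal_integral_eq_lintegral_ofReal hI (ae_of_all _ fun t => abs_nonneg _)]
        · rw [integral_undef hI]; simp
    _ ≤ ∫⁻ t, π {p | (t, p) ∈ S} := lintegral_mono keyA
    _ = ∫⁻ p, ENNReal.ofReal |p.1 - p.2| ∂π := keyB
end
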